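/- Let n ≥ 1 and let Φ = {e_i − e_j : 0 ≤ i, j ≤ n, i ≠ j} ⊂ ℝ^{n+1} be the root system of type A_n, where e_0, …, e_n is the standard orthonormal basis. Then for every α ∈ Φ there is no finite family α_1, …, α_r ∈ Φ (r ≥ 1) together with real numbers λ_1, …, λ_r satisfying 0 < λ_i < 1 for all i, such that: the vectors α_1, …, α_r are linearly independent; for all i ≠ j one has ⟨α_i, α_j⟩ ≥ 0 and α_i + α_j ∉ Φ; and ∑_{i=1}^r λ_i α_i = α. (Equivalently, the restricted set S′(α) of Courtès is empty for every root α of a type A_n root system.) -/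

import Mathlib

/-- for the type `Aₙ` root system
`Φ = {eᵢ - eⱼ : i ≠ j} ⊆ ℝ^{n+1}` (n ≥ 1), for every root `α` there is no finite family
`α₁, …, α_r ∈ Φ` with coefficients `0 < λᵢ < 1` such that the `αᵢ` are linearly
independent, pairwise `⟨αᵢ, αⱼ⟩ ≥ 0` with `αᵢ + αⱼ ∉ Φ`, and `∑ λᵢ αᵢ = α`
(Courtès' set `S′(α)` is empty). -/
theorem stmt_11 (n : ℕ) (hn : 1 ≤ n) :
    let Φ : Set (EuclideanSpace ℝ (Fin (n + 1))) :=
      {v | ∃ i j : Fin (n + 1), i ≠ j ∧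
        v = EuclideanSpace.single i (1 : ℝ) - EuclideanSpace.single j (1 : ℝ)};
    ∀ α ∈ Φ,
      ¬ ∃ (r : ℕ) (_ : 1 ≤ r) (a : Fin r → EuclideanSpace ℝ (Fin (n + 1)))
          (lam : Fin r → ℝ),
        (∀ i, a i ∈ Φ) ∧
        (∀ i, 0 < lam i ∧ lam i < 1) ∧
        LinearIndependent ℝ a ∧
        (∀ i j : Fin r, i ≠ j →
          0 ≤ (inner ℝ (a i) (a j) : ℝ) ∧ a i + a j ∉ Φ) ∧
        (∑ i, lam i • a i) = α := by
  intro Φ α hα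
  obtain ⟨p, q, hpq, rfl⟩ := hα
  rintro ⟨r, hr, a, lam, hΦ, hlam, hli, hpair, hsum⟩
  choose P Q hne ha using hΦ
  -- Claim A: for i ≠ j, P i ≠ Q j
  have hA : ∀ i j : Fin r, i ≠ j → P i ≠ Q j := by
    intro i j hij hPQ
    have h := (hpair i j hij).1
    rw [ha, ha] at h
    simp only [inner_sub_left, inner_sub_right, EuclideanSpace.inner_single_left,
      EuclideanSpace.single_apply, map_one, one_mul] at h
    have h1 : Q j ≠ P j := (hne j).symm
    have h2 : Q i ≠ Q j := fun hc => hne i (hPQ.trans hc.symm)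
    rw [hPQ] at h
    by_cases h3 : Q i = P j <;> simp [h1, h2, h3, hne j] at h <;> linarith
  -- coordinate evaluation
  have hcoord : ∀ k : Fin (n + 1),
      (∑ i, lam i * ((if k = P i then (1 : ℝ) else 0) - (if k = Q i then 1 else 0)))
        = (if k = p then 1 else 0) - (if k = q then 1 else 0) := by
    intro k
    have h1 := congrArg (fun v : EuclideanSpace ℝ (Fin (n + 1)) => v k) hsum
    have h2 : (∑ i, lam i • a i) k = ∑ i, (lam i • a i) k :=
      by simp
    rw [h2] at h1
    simpa [ha, EuclideanSpace.single_apply, mul_sub] using h1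
  have hlam0 : ∀ i, 0 < lam i := fun i => (hlam i).1
  -- all heads equal p
  have hP : ∀ i, P i = p := by
    intro i0
    set k := P i0 with hk
    have hQ0 : ∀ i, k ≠ Q i := by
      intro i
      by_cases h : i0 = i
      · subst h; exact hne i0
      · exact hA i0 i h
    have hpos : 0 < ∑ i, lam i * ((if k = P i then (1 : ℝ) else 0) - (if k = Q i then 1 else 0)) := by
      apply Finset.sum_pos'
      · intro i _
        rw [if_neg (hQ0 i)]
        rcases eq_or_ne k (P i) with h | h
        · simp [h]
          linarith [hlam0 i]
        · simp [h]
      · refine ⟨i0, Finset.mem_univ _, ?_⟩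
        rw [if_neg (hQ0 i0)]
        simp
        rw [if_pos hk]
        linarith [hlam0 i0]
    rw [hcoord k] at hpos
    by_cases h : k = p
    · exact h
    · exfalso
      rw [if_neg h] at hpos
      by_cases h2 : k = q <;> simp [h2] at hpos <;> linarith
  -- all tails equal q
  have hQ : ∀ i, Q i = q := by
    intro i0
    set k := Q i0 with hk
    have hP0 : ∀ i, k ≠ P i := by
      intro i
      rcases eq_or_ne i i0 with h | h
      · subst h; exact (Ne.symm (hne i))
      · exact fun hkp => hA i i0 h hkp.symm
    have hneg : (∑ i, lam i * ((if k = P i then (1 : ℝ) else 0) - (if k = Q i then 1 else 0))) < 0 := by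
      have hle : ∀ i ∈ Finset.univ, lam i * ((if k = P i then (1 : ℝ) else 0) - (if k = Q i then 1 else 0)) ≤ (fun _ => (0:ℝ)) i := by
        intro i _
        rw [if_neg (hP0 i)]
        rcases eq_or_ne k (Q i) with h | h
        · simp [h]
          linarith [hlam0 i]
        · simp [h]
      calc (∑ i, lam i * ((if k = P i then (1 : ℝ) else 0) - (if k = Q i then 1 else 0)))
          < ∑ _i : Fin r, (0:ℝ) := by
            apply Finset.sum_lt_sum hle
            refine ⟨i0, Finset.mem_univ _, ?_⟩
            rw [if_neg (hP0 i0)]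
            simp
            rw [if_pos hk]
            linarith [hlam0 i0]
        _ = 0 := by simp
    rw [hcoord k] at hneg
    by_cases h : k = q
    · exact h
    · exfalso
      rw [if_neg h] at hneg
      by_cases h2 : k = p <;> simp [h2] at hneg <;> linarith
  -- sum of lam = 1
  have hlsum : (∑ i, lam i) = 1 := by
    have h := hcoord p
    simp [hP, hQ, hpq] at h
    exact h
  -- now derive contradiction
  rcases Nat.lt_or_ge r 2 with h2 | h2
  · -- r = 1
    have hr1 : r = 1 := by omega
    subst hr1
    have : lam 0 = 1 := by simpa using hlsum
    linarith [(hlam 0).2]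
  · -- r ≥ 2: a is constant, contradicting linear independence
    have hconst : a ⟨0, by omega⟩ = a ⟨1, by omega⟩ := by
      rw [ha, ha, hP, hQ, hP, hQ]
    have h01 := hli.injective hconst
    have : (0 : ℕ) = 1 := congrArg Fin.val h01
    omega
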